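/- The Haagerup modular data D⁰Hg_ν has class-4 primary quantum dimensions S_{d_l,0}/S_{0,0} = νδ, class-2 and class-3 quantum dimensions 2 + νδ, class-1 non-vacuum quantum dimension 1 + νδ, and global dimension 1/S_{0,0} = ν(νδ + 2), where δ = (ν+√(ν²+4))/2. -/

import Mathlib

theorem stmt5 (n : ℕ) :
    let ν : ℝ := 2 * n + 1
    let μ : ℝ := ν ^ 2 + 4
    let δ : ℝ := (ν + Real.sqrt μ) / 2
    let y : ℝ := ν / Real.sqrt μ
    let S00 : ℝ := (1 - y) / (2 * ν)
    ((y / ν) / S00 = ν * δ) ∧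
    ((1 / ν) / S00 = 2 + ν * δ) ∧
    (((1 + y) / (2 * ν)) / S00 = 1 + ν * δ) ∧
    (1 / S00 = ν * (ν * δ + 2)) := by
  intro ν μ δ y S00
  have hν : (0:ℝ) < ν := by positivity
  set s := Real.sqrt μ with hsdef
  have hs2 : s ^ 2 = ν ^ 2 + 4 := Real.sq_sqrt (by positivity)
  have hs0 : 0 ≤ s := Real.sqrt_nonneg _
  have hνs : ν < s := by nlinarith
  have hs0' : s ≠ 0 := by linarith
  have hy : y = ν / s := rfl
  have h1y : 1 - y ≠ 0 := by
    rw [hy]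
    have : ν / s < 1 := (div_lt_one (by linarith)).mpr hνs
    linarith
  have hS : S00 = (1 - y) / (2 * ν) := rfl
  have hsν : s - ν ≠ 0 := sub_ne_zero.mpr (ne_of_gt hνs)
  refine ⟨?_, ?_, ?_, ?_⟩ <;>
    rw [show S00 = (1 - y) / (2 * ν) from rfl, show y = ν / s from rfl,
      show δ = (ν + s) / 2 from rfl] <;>
    field_simp
  · linear_combination (-1) * hs2
  · linear_combination (-ν) * hs2
  · linear_combination (-ν) * hs2
  · linear_combination (-ν) * hs2
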